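/- In the weighted-majority update on a finite hypothesis class S of set-valued functions σ: X → 2^Y, suppose at round t the prediction ŷ_t maximizes over y the total weight of hypotheses σ with y ∈ σ(x_t), and the update sets w^{t+1}(σ) = 0 if y_t ∉ σ(x_t), w^{t+1}(σ) = w^t(σ) if both y_t, ŷ_t ∈ σ(x_t), and w^{t+1}(σ) = 2 w^t(σ) if y_t ∈ σ(x_t) and ŷ_t ∉ σ(x_t). Then the total weight W_{t+1} = Σ_σ w^{t+1}(σ) satisfies W_{t+1} ≤ W_t. -/
import Mathlib


/-- Weighted-majority update: total weight is non-increasing. -/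
theorem stmt0 {H X Y : Type*} [Fintype H] [DecidableEq Y]
    (σ : H → X → Finset Y) (w : H → ℝ) (hw : ∀ h, 0 ≤ w h)
    (x : X) (yhat yt : Y)
    (hmax : ∀ y : Y, ∑ h ∈ Finset.univ.filter (fun h => y ∈ σ h x), w h
      ≤ ∑ h ∈ Finset.univ.filter (fun h => yhat ∈ σ h x), w h)
    (w' : H → ℝ)
    (hupd : ∀ h, w' h = if yt ∉ σ h x then 0
      else if yhat ∈ σ h x then w h else 2 * w h) :
    ∑ h, w' h ≤ ∑ h, w h := by
  classical
  have hmax' := hmax yt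
  rw [Finset.sum_filter, Finset.sum_filter] at hmax'
  have key : ∀ h, w' h + (if yhat ∈ σ h x ∧ yt ∉ σ h x then w h else 0)
      ≤ w h + (if yt ∈ σ h x ∧ yhat ∉ σ h x then w h else 0) := by
    intro h
    have := hw h
    rw [hupd h]
    split_ifs <;> simp_all <;> linarith
  have hsum := Finset.sum_le_sum (fun h (_ : h ∈ Finset.univ) => key h)
  rw [Finset.sum_add_distrib, Finset.sum_add_distrib] at hsum
  have e1 : ∑ h, (if yt ∈ σ h x then w h else 0)
      = ∑ h, ((if yt ∈ σ h x ∧ yhat ∈ σ h x then w h else 0)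
        + (if yt ∈ σ h x ∧ yhat ∉ σ h x then w h else 0)) :=
    Finset.sum_congr rfl fun h _ => by split_ifs <;> simp_all
  have e2 : ∑ h, (if yhat ∈ σ h x then w h else 0)
      = ∑ h, ((if yt ∈ σ h x ∧ yhat ∈ σ h x then w h else 0)
        + (if yhat ∈ σ h x ∧ yt ∉ σ h x then w h else 0)) :=
    Finset.sum_congr rfl fun h _ => by split_ifs <;> simp_all
  rw [Finset.sum_add_distrib] at e1 e2
  linarith
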